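/- Let K be an algebraically closed field of characteristic 0 and t ∈ K with t ≠ −2. The alternating bilinear bracket on K⁹ with basis e₁,…,e₉ determined by [e₁, e_i] = e_{i+1} for 2 ≤ i ≤ 8; [e₂, e₃] = e₅; [e₂, e₄] = e₆; [e₂, e₅] = (1−t)·e₇; [e₃, e₄] = t·e₇; [e₂, e₆] = (1−2t)·e₈; [e₃, e₅] = t·e₈; [e₂, e₇] = ((2−5t)/(2+t))·e₉; [e₃, e₆] = ((2t−2t²)/(2+t))·e₉; [e₄, e₅] = (3t²/(2+t))·e₉; and [e_i, e_j] = 0 for all other pairs i < j, satisfies the Jacobi identity, hence defines a Lie algebra f₉(t). -/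
import Mathlib


/-- The basis vector `e_{p+1}` of `K⁹` (0-based index `p`). -/
def stdVec9 (K : Type) [Field K] (p : ℕ) : Fin 9 → K :=
  fun k => if (k : ℕ) = p then 1 else 0

/-- The values `[e_{i+1}, e_{j+1}]` (0-based `i < j`) of the bracket of `f₉(t)`. -/
noncomputable def f9Val {K : Type} [Field K] (t : K) (i j : ℕ) : Fin 9 → K :=
  if i = 0 ∧ 1 ≤ j ∧ j ≤ 7 then stdVec9 K (j + 1)          -- [e₁,e_i] = e_{i+1}, 2 ≤ i ≤ 8
  else if i = 1 ∧ j = 2 then stdVec9 K 4                    -- [e₂,e₃] = e₅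
  else if i = 1 ∧ j = 3 then stdVec9 K 5                    -- [e₂,e₄] = e₆
  else if i = 1 ∧ j = 4 then (1 - t) • stdVec9 K 6          -- [e₂,e₅] = (1−t)e₇
  else if i = 2 ∧ j = 3 then t • stdVec9 K 6                -- [e₃,e₄] = t·e₇
  else if i = 1 ∧ j = 5 then (1 - 2 * t) • stdVec9 K 7      -- [e₂,e₆] = (1−2t)e₈
  else if i = 2 ∧ j = 4 then t • stdVec9 K 7                -- [e₃,e₅] = t·e₈
  else if i = 1 ∧ j = 6 then ((2 - 5 * t) / (2 + t)) • stdVec9 K 8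
    -- [e₂,e₇] = ((2−5t)/(2+t))e₉
  else if i = 2 ∧ j = 5 then ((2 * t - 2 * t ^ 2) / (2 + t)) • stdVec9 K 8
    -- [e₃,e₆] = ((2t−2t²)/(2+t))e₉
  else if i = 3 ∧ j = 4 then ((3 * t ^ 2) / (2 + t)) • stdVec9 K 8
    -- [e₄,e₅] = (3t²/(2+t))e₉
  else 0

/-- The alternating bilinear bracket of `f₉(t)` on `K⁹`. -/
noncomputable def f9Br {K : Type} [Field K] (t : K) (x y : Fin 9 → K) : Fin 9 → K :=
  ∑ i : Fin 9, ∑ j : Fin 9,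
    (x i * y j) •
      (if (i : ℕ) < (j : ℕ) then f9Val t i j
       else if (j : ℕ) < (i : ℕ) then -f9Val t j i else 0)

noncomputable def brFun {K : Type} [Field K] (t : K) (x y : Fin 9 → K) : Fin 9 → K := fun k =>
  if (k : ℕ) = 2 then x 0 * y 1 - x 1 * y 0
  else if (k : ℕ) = 3 then x 0 * y 2 - x 2 * y 0
  else if (k : ℕ) = 4 then x 0 * y 3 - x 3 * y 0 + (x 1 * y 2 - x 2 * y 1)
  else if (k : ℕ) = 5 then x 0 * y 4 - x 4 * y 0 + (x 1 * y 3 - x 3 * y 1)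
  else if (k : ℕ) = 6 then
    x 0 * y 5 - x 5 * y 0 + (1 - t) * (x 1 * y 4 - x 4 * y 1) + t * (x 2 * y 3 - x 3 * y 2)
  else if (k : ℕ) = 7 then
    x 0 * y 6 - x 6 * y 0 + (1 - 2*t) * (x 1 * y 5 - x 5 * y 1) + t * (x 2 * y 4 - x 4 * y 2)
  else if (k : ℕ) = 8 then
    x 0 * y 7 - x 7 * y 0 + ((2 - 5*t)/(2+t)) * (x 1 * y 6 - x 6 * y 1)
      + ((2*t - 2*t^2)/(2+t)) * (x 2 * y 5 - x 5 * y 2)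
      + ((3*t^2)/(2+t)) * (x 3 * y 4 - x 4 * y 3)
  else 0

lemma fs3 : (Fin.succ 2 : Fin 9) = 3 := rfl
lemma fs4 : ((Fin.succ 2).succ : Fin 9) = 4 := rfl
lemma fs5 : ((Fin.succ 2).succ.succ : Fin 9) = 5 := rfl
lemma fs6 : ((Fin.succ 2).succ.succ.succ : Fin 9) = 6 := rfl
lemma fs7 : ((Fin.succ 2).succ.succ.succ.succ : Fin 9) = 7 := rfl
lemma fs8 : ((Fin.succ 2).succ.succ.succ.succ.succ : Fin 9) = 8 := rfl

set_option maxHeartbeats 2000000 in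
lemma f9Br_eq {K : Type} [Field K] (t : K) (x y : Fin 9 → K) : f9Br t x y = brFun t x y := by
  funext k
  fin_cases k <;>
    simp (config := { decide := true }) [f9Br, f9Val, stdVec9, Fin.sum_univ_succ, brFun, fs3, fs4, fs5, fs6, fs7, fs8, Matrix.cons_val_succ] <;>
    ring


set_option maxHeartbeats 4000000 in
/-- For `t ∈ K`, `t ≠ −2`, the bracket of `f₉(t)` satisfies the
Jacobi identity, hence defines a Lie algebra. -/
theorem stmt_19 {K : Type} [Field K] [CharZero K] [IsAlgClosed K] (t : K)
    (ht : t ≠ -2) :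
    ∀ x y z : Fin 9 → K,
      f9Br t (f9Br t x y) z + f9Br t (f9Br t y z) x + f9Br t (f9Br t z x) y = 0 := by
  have h2t : (2:K) + t ≠ 0 := fun h => ht (by linear_combination h)
  intro x y z
  simp only [f9Br_eq]
  funext k
  fin_cases k <;>
    simp (config := { decide := true }) only [brFun, Pi.add_apply, Pi.zero_apply,
      if_true, if_false, Fin.isValue] <;>
    field_simp <;>
    ring
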